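/- Let q be a prime power, let m ≥ 2 and c, h, M be positive integers with c < ((m−1)/m)·M, and let r : 𝔽_q → 𝔽_q be a function. Suppose F_1(X), …, F_m(X) ∈ 𝔽_q[X] each have degree less than cq and are all r-twisted (h, M)-pseudopolynomials, and let k be an integer with k > (M/((m−1)M − mc))·(h + 1). Then there exist polynomials A_1(X), …, A_m(X) ∈ 𝔽_q[X], not all zero, each of degree less than Mq and pseudodegree at most k, such that Σ_{i=1}^{m} A_i(X)·F_i(X) = 0. -/

import Mathlib

open Polynomial

/-- `A ∈ 𝔽_q[X]` has pseudodegree at most `k`: for every `ℓ ≥ 0`, the remainder of the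
`ℓ`-th Hasse derivative of `A` upon division by `Λ(X) = X^q - X` has degree at most `k`. -/
def PdegLE {F : Type*} [Field F] (q : ℕ) (A : F[X]) (k : ℕ) : Prop :=
  ∀ ℓ : ℕ, ((hasseDeriv ℓ A) %ₘ (X ^ q - X)).degree ≤ (k : WithBot ℕ)

/-- `P ∈ 𝔽_q[X]` is an `r`-twisted `(h, M)`-pseudopolynomial: for every `ℓ < M` there is
`U_ℓ ∈ 𝔽_q[X]` of degree at most `h` with `P^{[ℓ]}(α) = r(α)·U_ℓ(α)` for all `α ∈ 𝔽_q`. -/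
def Twisted {F : Type*} [Field F] (r : F → F) (h M : ℕ) (P : F[X]) : Prop :=
  ∀ ℓ < M, ∃ U : F[X], U.degree ≤ (h : WithBot ℕ) ∧
    ∀ α : F, (hasseDeriv ℓ P).eval α = r α * U.eval α

section Aux

open Finset

variable {F : Type*} [Field F] [Fintype F]

omit [Fintype F] in
lemma hasse_degree_le {k : ℕ} {a : F[X]} (ha : a.degree ≤ (k : WithBot ℕ)) (s : ℕ) :
    (hasseDeriv s a).degree ≤ (k : WithBot ℕ) := by
  rw [degree_le_iff_coeff_zero] at ha ⊢
  intro d hd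
  have hd' : (k : WithBot ℕ) < ((d + s : ℕ) : WithBot ℕ) := by
    refine lt_of_lt_of_le hd ?_
    exact_mod_cast (Nat.le_add_right d s)
  rw [hasseDeriv_coeff, ha (d + s) hd', mul_zero]

lemma lam_monic : Monic ((X : F[X]) ^ Fintype.card F - X) := by
  have h : 1 < Fintype.card F := Fintype.one_lt_card
  exact monic_X_pow_sub (by simpa using (by exact_mod_cast h : (1 : WithBot ℕ) < Fintype.card F))

lemma lam_degree : ((X : F[X]) ^ Fintype.card F - X).degree = (Fintype.card F : WithBot ℕ) := by
  have h : 1 < Fintype.card F := Fintype.one_lt_card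
  rw [degree_sub_eq_left_of_degree_lt, degree_X_pow]
  rw [degree_X_pow, degree_X]
  exact_mod_cast h

lemma lam_eval (α : F) : ((X : F[X]) ^ Fintype.card F - X).eval α = 0 := by
  simp [FiniteField.pow_card]

lemma lam_hasse (p n : ℕ) (hp : p.Prime) [CharP F p] (hqpn : Fintype.card F = p ^ n)
    (t : ℕ) :
    ∃ w : F[X], hasseDeriv t ((X : F[X]) ^ Fintype.card F - X)
      = C (((X : F[X]) ^ Fintype.card F - X).coeff t) + ((X : F[X])^Fintype.card F - X) * w := by
  set q := Fintype.card F with hq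
  have hq1 : 1 < q := Fintype.one_lt_card
  rcases Nat.eq_zero_or_pos t with ht | ht
  · subst ht
    refine ⟨1, ?_⟩
    simp [hasseDeriv_zero']
    omega
  · refine ⟨0, ?_⟩
    rw [mul_zero, add_zero]
    have hX : (X : F[X]) = monomial 1 1 := by simp [monomial_one_one_eq_X]
    have hXq : (X : F[X])^q = monomial q 1 := by
      rw [hX, monomial_pow]; simp
    rw [map_sub, hXq, hX, hasseDeriv_monomial, hasseDeriv_monomial]
    simp only [mul_one]
    rw [coeff_sub, coeff_monomial, coeff_monomial]
    rcases lt_trichotomy t q with h | h | h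
    · have hdvd : p ∣ q.choose t := by
        rw [hqpn]
        exact hp.dvd_choose_pow (by omega) (by rw [← hqpn]; omega)
      have hz : ((q.choose t : ℕ) : F) = 0 := (CharP.cast_eq_zero_iff F p _).mpr hdvd
      rw [if_neg (by omega)]
      rcases Nat.eq_or_lt_of_le ht with ht1 | ht1
      · rw [if_pos (by omega), ← ht1]
        have hn : n ≠ 0 := by rintro rfl; simp at hqpn; omega
        have hqz : ((q:ℕ) : F) = 0 :=
          (CharP.cast_eq_zero_iff F p q).mpr (hqpn ▸ dvd_pow_self p hn)
        simp [hz, hqz]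
      · rw [if_neg (by omega)]
        have h1 : Nat.choose 1 t = 0 := Nat.choose_eq_zero_of_lt (by omega)
        simp [h1, hz]
    · subst h
      rw [if_pos rfl, if_neg (by omega)]
      have h1 : Nat.choose 1 q = 0 := Nat.choose_eq_zero_of_lt (by omega)
      simp [h1]
    · rw [if_neg (by omega), if_neg (by omega)]
      have h1 : Nat.choose 1 t = 0 := Nat.choose_eq_zero_of_lt (by omega)
      have h2 : q.choose t = 0 := Nat.choose_eq_zero_of_lt (by omega)
      simp [h1, h2]

lemma lam_hasse_pow
    (hbase : ∀ t : ℕ, ∃ w : F[X], hasseDeriv t ((X : F[X]) ^ Fintype.card F - X)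
      = C (((X : F[X]) ^ Fintype.card F - X).coeff t) + ((X : F[X])^Fintype.card F - X) * w)
    (j : ℕ) :
    ∀ t : ℕ, ∃ w : F[X], hasseDeriv t (((X : F[X]) ^ Fintype.card F - X)^j)
      = C ((((X : F[X]) ^ Fintype.card F - X)^j).coeff t)
        + ((X : F[X])^Fintype.card F - X) * w := by
  set Λ : F[X] := (X : F[X]) ^ Fintype.card F - X with hΛ
  induction j with
  | zero =>
    intro t
    refine ⟨0, ?_⟩
    rcases Nat.eq_zero_or_pos t with rfl | ht
    · simp [hasseDeriv_zero']
    · rw [pow_zero]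
      have : (1 : F[X]) = C 1 := by simp
      rw [this, hasseDeriv_C _ _ ht, coeff_C, if_neg (by omega), map_zero, mul_zero, add_zero]
  | succ j ih =>
    intro t
    choose w1 hw1 using ih
    choose w2 hw2 using hbase
    rw [pow_succ, hasseDeriv_mul]
    refine ⟨∑ ab ∈ antidiagonal t,
      (C ((Λ^j).coeff ab.1) * w2 ab.2 + w1 ab.1 * C (Λ.coeff ab.2)
        + w1 ab.1 * Λ * w2 ab.2), ?_⟩
    rw [coeff_mul, map_sum, Finset.mul_sum, ← Finset.sum_add_distrib]
    refine Finset.sum_congr rfl fun ab _ => ?_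
    rw [hw1 ab.1, hw2 ab.2, C_mul]
    ring

lemma digits_unique : ∀ (nn : ℕ) (a : ℕ → F[X]),
    (∀ j, (a j).degree < (Fintype.card F : WithBot ℕ)) →
    ∑ j ∈ Finset.range nn, a j * ((X : F[X]) ^ Fintype.card F - X) ^ j = 0 →
    ∀ j < nn, a j = 0 := by
  intro nn
  induction nn with
  | zero => intro a _ _ j hj; omega
  | succ n ih =>
    intro a hdeg hsum j hj
    set Λ : F[X] := (X : F[X]) ^ Fintype.card F - X with hΛ
    rw [Finset.sum_range_succ'] at hsum
    have hsum' : a 0 + Λ * ∑ i ∈ Finset.range n, a (i+1) * Λ ^ i = 0 := by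
      rw [← hsum]
      rw [Finset.mul_sum]
      simp [pow_succ]
      ring_nf
    have hdvd : Λ ∣ a 0 := ⟨-∑ i ∈ Finset.range n, a (i+1) * Λ ^ i, by linear_combination hsum'⟩
    have ha0 : a 0 = 0 := by
      by_contra hne
      have := Polynomial.eq_zero_of_dvd_of_degree_lt hdvd
        (lt_of_lt_of_le (hdeg 0) (by rw [lam_degree]))
      exact hne this
    have hS : ∑ i ∈ Finset.range n, a (i+1) * Λ ^ i = 0 := by
      have hΛne : Λ ≠ 0 := lam_monic.ne_zero
      have := hsum'
      rw [ha0, zero_add, mul_eq_zero] at this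
      tauto
    rcases Nat.eq_zero_or_pos j with rfl | hjp
    · exact ha0
    · obtain ⟨j', rfl⟩ : ∃ j', j = j' + 1 := ⟨j - 1, by omega⟩
      exact ih (fun i => a (i+1)) (fun i => hdeg _) hS j' (by omega)

/-- the polynomial with coefficient vector `v` -/
noncomputable def apoly {F : Type*} [Field F] (k : ℕ) (v : Fin (k+1) → F) : F[X] :=
  ∑ d : Fin (k+1), C (v d) * X^(d : ℕ)

omit [Fintype F] in
lemma apoly_degree_le (k : ℕ) (v : Fin (k+1) → F) : (apoly k v).degree ≤ (k : WithBot ℕ) := by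
  refine (degree_sum_le _ _).trans ?_
  rw [Finset.sup_le_iff]
  intro d _
  refine (degree_C_mul_X_pow_le _ _).trans ?_
  exact_mod_cast (by omega : (d:ℕ) ≤ k)

omit [Fintype F] in
lemma apoly_coeff (k : ℕ) (v : Fin (k+1) → F) (d : Fin (k+1)) :
    (apoly k v).coeff (d : ℕ) = v d := by
  rw [apoly, finset_sum_coeff]
  rw [Finset.sum_eq_single d]
  · simp
  · intro b _ hbd
    rw [coeff_C_mul, coeff_X_pow, if_neg (by simpa [Fin.val_eq_val, eq_comm] using hbd), mul_zero]
  · simp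

omit [Fintype F] in
lemma apoly_add (k : ℕ) (v w : Fin (k+1) → F) :
    apoly k (v + w) = apoly k v + apoly k w := by
  simp [apoly, C_add, add_mul, Finset.sum_add_distrib]

omit [Fintype F] in
lemma apoly_smul (k : ℕ) (c : F) (v : Fin (k+1) → F) :
    apoly k (c • v) = c • apoly k v := by
  simp [apoly, Finset.smul_sum, smul_eq_C_mul, C_mul, mul_assoc]

end Aux


section Main

open Finset

variable {F : Type*} [Field F] [Fintype F]

noncomputable def lam (F : Type*) [Field F] [Fintype F] : F[X] :=
  X ^ Fintype.card F - X

lemma lam_def : lam F = X ^ Fintype.card F - X := rfl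

omit [Fintype F] in
lemma nsmul_coe (a b : ℕ) : a • ((b : ℕ) : WithBot ℕ) = ((a * b : ℕ) : WithBot ℕ) := by
  induction a with
  | zero => simp
  | succ n ih =>
    rw [succ_nsmul, ih, ← Nat.cast_add]
    congr 1
    ring

omit [Fintype F] in
lemma degC_mul_le (e : F) (p : F[X]) : (C e * p).degree ≤ p.degree :=
  (degree_mul_le _ _).trans (by simpa using add_le_add degree_C_le (le_refl p.degree))

noncomputable def avD (k m N : ℕ) (x : Fin m × Fin N × Fin (k+1) → F) (i : Fin m)
    (j : Fin N) : F[X] := apoly k fun d => x (i, j, d)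

noncomputable def AD (k m N : ℕ) (x : Fin m × Fin N × Fin (k+1) → F) (i : Fin m) : F[X] :=
  ∑ j : Fin N, avD k m N x i j * (lam F)^(j : ℕ)

noncomputable def BD (k m N : ℕ) (x : Fin m × Fin N × Fin (k+1) → F) (i : Fin m)
    (ℓ : ℕ) : F[X] :=
  ∑ j : Fin N, ∑ st ∈ antidiagonal ℓ,
    C (((lam F)^(j : ℕ)).coeff st.2) * hasseDeriv st.1 (avD k m N x i j)

noncomputable def VD (k m N : ℕ) (U : Fin m → ℕ → F[X]) (x : Fin m × Fin N × Fin (k+1) → F)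
    (ℓ : ℕ) : F[X] :=
  ∑ i : Fin m, ∑ sb ∈ antidiagonal ℓ, BD k m N x i sb.1 * U i sb.2

variable {k m N : ℕ}

lemma BD_deg (x : Fin m × Fin N × Fin (k+1) → F) (i : Fin m) (ℓ : ℕ) :
    (BD k m N x i ℓ).degree ≤ (k : WithBot ℕ) := by
  refine (degree_sum_le _ _).trans ?_
  rw [Finset.sup_le_iff]
  intro j _
  refine (degree_sum_le _ _).trans ?_
  rw [Finset.sup_le_iff]
  intro st _
  exact (degC_mul_le _ _).trans (hasse_degree_le (apoly_degree_le _ _) _)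

lemma AD_hasse
    (hLpow : ∀ j t : ℕ, ∃ w : F[X], hasseDeriv t ((lam F)^j)
      = C (((lam F)^j).coeff t) + lam F * w)
    (x : Fin m × Fin N × Fin (k+1) → F) (i : Fin m) (ℓ : ℕ) :
    ∃ w : F[X], hasseDeriv ℓ (AD k m N x i) = BD k m N x i ℓ + lam F * w := by
  choose W hW using hLpow
  refine ⟨∑ j : Fin N, ∑ st ∈ antidiagonal ℓ,
    hasseDeriv st.1 (avD k m N x i j) * W (j : ℕ) st.2, ?_⟩
  rw [AD, BD, map_sum, Finset.mul_sum, ← Finset.sum_add_distrib]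
  refine Finset.sum_congr rfl fun j _ => ?_
  rw [hasseDeriv_mul, Finset.mul_sum, ← Finset.sum_add_distrib]
  refine Finset.sum_congr rfl fun st _ => ?_
  rw [hW (j : ℕ) st.2]
  ring

lemma AD_eval_hasse
    (hLpow : ∀ j t : ℕ, ∃ w : F[X], hasseDeriv t ((lam F)^j)
      = C (((lam F)^j).coeff t) + lam F * w)
    (x : Fin m × Fin N × Fin (k+1) → F) (i : Fin m) (ℓ : ℕ) (α : F) :
    (hasseDeriv ℓ (AD k m N x i)).eval α = (BD k m N x i ℓ).eval α := by
  obtain ⟨w, hw⟩ := AD_hasse hLpow x i ℓ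
  rw [hw, eval_add, eval_mul, lam_def, lam_eval, zero_mul, add_zero]

lemma AD_deg (hkq : k < Fintype.card F) (x : Fin m × Fin N × Fin (k+1) → F) (i : Fin m) :
    (AD k m N x i).degree < ((N * Fintype.card F : ℕ) : WithBot ℕ) := by
  set q := Fintype.card F
  refine lt_of_le_of_lt (degree_sum_le _ _) ?_
  rw [Finset.sup_lt_iff (by exact_mod_cast WithBot.bot_lt_coe _)]
  intro j _
  refine lt_of_le_of_lt (degree_mul_le _ _) ?_
  have h1 : (avD k m N x i j).degree ≤ (k : WithBot ℕ) := apoly_degree_le _ _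
  have h2 : ((lam F)^(j:ℕ)).degree ≤ (((j : ℕ) * q : ℕ) : WithBot ℕ) := by
    refine (degree_pow_le _ _).trans ?_
    rw [lam_def, lam_degree]
    rw [nsmul_eq_mul]
    exact_mod_cast le_refl _
  refine lt_of_le_of_lt (add_le_add h1 h2) ?_
  have hjN : (j : ℕ) + 1 ≤ N := j.2
  have : ((k : ℕ) : WithBot ℕ) + (((j : ℕ) * q : ℕ) : WithBot ℕ)
      = ((k + (j : ℕ) * q : ℕ) : WithBot ℕ) := by
    push_cast; ring
  rw [this]
  have : k + (j : ℕ) * q < N * q := by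
    have : ((j:ℕ) + 1) * q ≤ N * q := Nat.mul_le_mul_right _ hjN
    nlinarith
  exact_mod_cast this

lemma AD_pdeg
    (hLpow : ∀ j t : ℕ, ∃ w : F[X], hasseDeriv t ((lam F)^j)
      = C (((lam F)^j).coeff t) + lam F * w)
    (hkq : k < Fintype.card F)
    (x : Fin m × Fin N × Fin (k+1) → F) (i : Fin m) :
    PdegLE (Fintype.card F) (AD k m N x i) k := by
  intro ℓ
  obtain ⟨w, hw⟩ := AD_hasse hLpow x i ℓ
  have hmod : hasseDeriv ℓ (AD k m N x i) %ₘ (X ^ Fintype.card F - X)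
      = BD k m N x i ℓ %ₘ (X ^ Fintype.card F - X) := by
    refine modByMonic_eq_of_dvd_sub lam_monic ⟨w, ?_⟩
    rw [hw, lam_def]; ring
  rw [hmod, (modByMonic_eq_self_iff lam_monic).mpr]
  · exact BD_deg x i ℓ
  · rw [lam_degree]
    exact lt_of_le_of_lt (BD_deg x i ℓ) (by exact_mod_cast hkq)

lemma AD_zero (hkq : k < Fintype.card F) (x : Fin m × Fin N × Fin (k+1) → F) (i : Fin m)
    (hA : AD k m N x i = 0) (j : Fin N) (d : Fin (k+1)) : x (i, j, d) = 0 := by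
  have hav : ∀ j : Fin N, avD k m N x i j = 0 := by
    have : ∀ jj < N, (if hj : jj < N then avD k m N x i ⟨jj, hj⟩ else 0) = (0 : F[X]) := by
      refine digits_unique N (fun jj => if hj : jj < N then avD k m N x i ⟨jj, hj⟩ else 0) ?_ ?_
      · intro jj
        by_cases hj : jj < N
        · show (if hj : jj < N then avD k m N x i ⟨jj, hj⟩ else 0).degree < ((Fintype.card F : ℕ) : WithBot ℕ)
          rw [dif_pos hj]
          refine lt_of_le_of_lt (apoly_degree_le _ _) (by exact_mod_cast hkq)
        · show (if hj : jj < N then avD k m N x i ⟨jj, hj⟩ else 0).degree < ((Fintype.card F : ℕ) : WithBot ℕ)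
          rw [dif_neg hj, degree_zero]
          exact WithBot.bot_lt_coe _
      · show ∑ jj ∈ Finset.range N,
          (if hj : jj < N then avD k m N x i ⟨jj, hj⟩ else 0)
            * (X ^ Fintype.card F - X) ^ jj = 0
        calc ∑ jj ∈ Finset.range N,
              (if hj : jj < N then avD k m N x i ⟨jj, hj⟩ else 0)
                * (X ^ Fintype.card F - X) ^ jj
            = AD k m N x i := by
              rw [Finset.sum_range (f := fun jj =>
                (if hj : jj < N then avD k m N x i ⟨jj, hj⟩ else 0)
                  * (X ^ Fintype.card F - X) ^ jj), AD]
              refine Finset.sum_congr rfl fun j _ => ?_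
              rw [dif_pos j.2, lam_def]
          _ = 0 := hA
    intro j
    have h2 := this (j : ℕ) j.2
    simp only [dif_pos j.2] at h2
    simpa using h2
  have := congrArg (fun P => P.coeff (d : ℕ)) (hav j)
  simpa [avD, apoly_coeff] using this

lemma VD_deg {h : ℕ} (U : Fin m → ℕ → F[X]) (hU : ∀ i b, (U i b).degree ≤ (h : WithBot ℕ))
    (x : Fin m × Fin N × Fin (k+1) → F) (ℓ : ℕ) :
    (VD k m N U x ℓ).degree ≤ ((k + h : ℕ) : WithBot ℕ) := by
  refine (degree_sum_le _ _).trans ?_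
  rw [Finset.sup_le_iff]
  intro i _
  refine (degree_sum_le _ _).trans ?_
  rw [Finset.sup_le_iff]
  intro sb _
  refine (degree_mul_le _ _).trans ?_
  refine (add_le_add (BD_deg x i sb.1) (hU i sb.2)).trans ?_
  push_cast
  exact le_refl _

lemma VD_add (U : Fin m → ℕ → F[X]) (x y : Fin m × Fin N × Fin (k+1) → F) (ℓ : ℕ) :
    VD k m N U (x + y) ℓ = VD k m N U x ℓ + VD k m N U y ℓ := by
  have hav : ∀ i j, avD k m N (x + y) i j = avD k m N x i j + avD k m N y i j := by
    intro i j
    rw [avD, avD, avD, ← apoly_add]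
    rfl
  have hB : ∀ i ℓ', BD k m N (x+y) i ℓ' = BD k m N x i ℓ' + BD k m N y i ℓ' := by
    intro i ℓ'
    rw [BD, BD, BD, ← Finset.sum_add_distrib]
    refine Finset.sum_congr rfl fun j _ => ?_
    rw [← Finset.sum_add_distrib]
    refine Finset.sum_congr rfl fun st _ => ?_
    rw [hav, map_add, mul_add]
  rw [VD, VD, VD, ← Finset.sum_add_distrib]
  refine Finset.sum_congr rfl fun i _ => ?_
  rw [← Finset.sum_add_distrib]
  refine Finset.sum_congr rfl fun sb _ => ?_
  rw [hB, add_mul]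

lemma VD_smul (U : Fin m → ℕ → F[X]) (e : F) (x : Fin m × Fin N × Fin (k+1) → F) (ℓ : ℕ) :
    VD k m N U (e • x) ℓ = e • VD k m N U x ℓ := by
  have hav : ∀ i j, avD k m N (e • x) i j = e • avD k m N x i j := by
    intro i j
    rw [avD, avD, ← apoly_smul]
    rfl
  have hB : ∀ i ℓ', BD k m N (e • x) i ℓ' = e • BD k m N x i ℓ' := by
    intro i ℓ'
    rw [BD, BD, Finset.smul_sum]
    refine Finset.sum_congr rfl fun j _ => ?_
    rw [Finset.smul_sum]
    refine Finset.sum_congr rfl fun st _ => ?_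
    rw [hav, map_smul, mul_smul_comm]
  rw [VD, VD, Finset.smul_sum]
  refine Finset.sum_congr rfl fun i _ => ?_
  rw [Finset.smul_sum]
  refine Finset.sum_congr rfl fun sb _ => ?_
  rw [hB, smul_mul_assoc]

noncomputable def PhiD (k m N M h : ℕ) (U : Fin m → ℕ → F[X]) :
    ((Fin m × Fin N × Fin (k+1)) → F) →ₗ[F] ((Fin M × Fin (k+h+1)) → F) where
  toFun := fun x pr => (VD k m N U x (pr.1 : ℕ)).coeff (pr.2 : ℕ)
  map_add' := by
    intro x y
    funext pr
    show (VD k m N U (x + y) (pr.1 : ℕ)).coeff (pr.2 : ℕ) = _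
    rw [VD_add]
    simp
  map_smul' := by
    intro e x
    funext pr
    show (VD k m N U (e • x) (pr.1 : ℕ)).coeff (pr.2 : ℕ) = _
    rw [VD_smul]
    simp

lemma PhiD_apply (k m N M h : ℕ) (U : Fin m → ℕ → F[X])
    (x : (Fin m × Fin N × Fin (k+1)) → F) (pr : Fin M × Fin (k+h+1)) :
    PhiD k m N M h U x pr = (VD k m N U x (pr.1 : ℕ)).coeff (pr.2 : ℕ) := rfl

end Main

/-- Let `m ≥ 2`, `c, h, M` positive, `c < ((m-1)/m)·M`, and let
`F_1, …, F_m ∈ 𝔽_q[X]` each of degree `< cq` all be `r`-twisted `(h, M)`-pseudopolynomials.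
Let `k > (M/((m-1)M - mc))·(h+1)`. Then there exist `A_1, …, A_m ∈ 𝔽_q[X]`, not all zero,
each of degree `< Mq` and pseudodegree at most `k`, with `Σ_i A_i·F_i = 0`. -/
theorem stmt15 {F : Type*} [Field F] [Fintype F] (q : ℕ) (hq : Fintype.card F = q)
    (m c h M : ℕ) (hm : 2 ≤ m) (hc : 0 < c) (hh : 0 < h) (hM : 0 < M)
    (hcM : (c : ℝ) < ((m : ℝ) - 1) / (m : ℝ) * (M : ℝ))
    (r : F → F) (Fi : Fin m → F[X])
    (hFdeg : ∀ i, (Fi i).degree < ((c * q : ℕ) : WithBot ℕ))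
    (hFtw : ∀ i, Twisted r h M (Fi i))
    (k : ℕ)
    (hk : (M : ℝ) / (((m : ℝ) - 1) * (M : ℝ) - (m : ℝ) * (c : ℝ)) * ((h : ℝ) + 1) < (k : ℝ)) :
    ∃ A : Fin m → F[X], (¬ ∀ i, A i = 0) ∧
      (∀ i, (A i).degree < ((M * q : ℕ) : WithBot ℕ)) ∧
      (∀ i, PdegLE q (A i) k) ∧
      ∑ i, A i * Fi i = 0 := by
  classical
  subst hq
  have hq1 : 1 < Fintype.card F := Fintype.one_lt_card
  set q := Fintype.card F with hqdef
  -- numeric facts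
  have hmc : m * c < (m-1) * M := by
    have hm0 : (0:ℝ) < (m:ℝ) := by positivity
    rw [div_mul_eq_mul_div, lt_div_iff₀ hm0] at hcM
    have h1 : (m:ℝ) * c < ((m:ℝ)-1) * M := by nlinarith
    have hcast : (((m-1 : ℕ)) : ℝ) = (m:ℝ) - 1 := by
      rw [Nat.cast_sub (by omega : 1 ≤ m)]; simp
    rw [← hcast] at h1
    exact_mod_cast h1
  have hcM' : c < M := by
    have h1 : (m-1) * M < m * M := mul_lt_mul_of_pos_right (by omega) hM
    have h2 : ¬ (M ≤ c) := by
      intro hcon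
      have h3 : m * M ≤ m * c := Nat.mul_le_mul_left _ hcon
      omega
    omega
  have hDpos : 0 < (m-1) * M - m * c := by omega
  have hDcast : ((((m-1) * M - m * c : ℕ)) : ℝ) = ((m:ℝ)-1)*M - (m:ℝ)*c := by
    rw [Nat.cast_sub hmc.le, Nat.cast_mul, Nat.cast_mul, Nat.cast_sub (by omega : 1 ≤ m)]
    simp
  have hkD : M * (h+1) < k * ((m-1) * M - m * c) := by
    have hD0 : (0:ℝ) < ((((m-1) * M - m * c : ℕ)) : ℝ) := by exact_mod_cast hDpos
    rw [← hDcast, div_mul_eq_mul_div, div_lt_iff₀ hD0] at hk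
    exact_mod_cast hk
  -- trivial case: some Fi is zero
  by_cases hzero : ∃ i0, Fi i0 = 0
  · obtain ⟨i0, hFi0⟩ := hzero
    have hMq2 : 0 < M * q := by positivity
    refine ⟨fun i => if i = i0 then 1 else 0, ?_, ?_, ?_, ?_⟩
    · intro hall
      have := hall i0
      simp at this
    · intro i
      beta_reduce
      by_cases hi : i = i0
      · rw [if_pos hi, degree_one]
        exact_mod_cast hMq2
      · rw [if_neg hi, degree_zero]
        exact WithBot.bot_lt_coe _
    · intro i ℓ
      beta_reduce
      by_cases hi : i = i0
      · rw [if_pos hi]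
        rcases Nat.eq_zero_or_pos ℓ with rfl | hℓ
        · rw [hasseDeriv_zero']
          rw [(modByMonic_eq_self_iff lam_monic).mpr]
          · rw [degree_one]
            exact_mod_cast Nat.zero_le k
          · rw [lam_degree, degree_one]
            exact_mod_cast (by omega : (0:ℕ) < q)
        · have h1 : (1 : F[X]) = C 1 := by simp
          rw [h1, hasseDeriv_C _ _ hℓ, zero_modByMonic, degree_zero]
          exact bot_le
      · rw [if_neg hi, map_zero, zero_modByMonic, degree_zero]
        exact bot_le
    · rw [Finset.sum_eq_single i0]
      · beta_reduce
        rw [if_pos rfl, one_mul, hFi0]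
      · intro b _ hb
        beta_reduce
        rw [if_neg hb, zero_mul]
      · intro hcon
        exact absurd (Finset.mem_univ i0) hcon
  push_neg at hzero
  by_cases hkq : q ≤ k
  · -- easy case : k ≥ q, pseudodegree is free
    have hpd : ∀ P : F[X], PdegLE q P k := by
      intro P ℓ
      refine le_trans (le_of_lt (degree_modByMonic_lt _ lam_monic)) ?_
      rw [lam_degree]
      exact_mod_cast hkq
    have hFd : ∀ i', (Fi i').degree < ((M * q : ℕ) : WithBot ℕ) := by
      intro i'
      refine lt_of_lt_of_le (hFdeg i') ?_
      exact_mod_cast Nat.mul_le_mul_right q hcM'.le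
    set i0 : Fin m := ⟨0, by omega⟩ with hi0
    set i1 : Fin m := ⟨1, by omega⟩ with hi1
    have hne01 : i0 ≠ i1 := by
      simp [hi0, hi1, Fin.ext_iff]
    refine ⟨fun i => if i = i0 then Fi i1 else if i = i1 then -(Fi i0) else 0, ?_, ?_, ?_, ?_⟩
    · intro hall
      have h2 := hall i1
      rw [show (fun i => if i = i0 then Fi i1 else if i = i1 then -Fi i0 else 0) i1
            = if i1 = i0 then Fi i1 else if i1 = i1 then -Fi i0 else 0 from rfl,
          if_neg (Ne.symm hne01), if_pos rfl] at h2
      exact hzero i0 (neg_eq_zero.mp h2)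
    · intro i
      beta_reduce
      by_cases h0 : i = i0
      · simpa [h0] using hFd i1
      · by_cases h1 : i = i1
        · rw [h1, if_neg (Ne.symm hne01), if_pos rfl, degree_neg]
          exact hFd i0
        · rw [if_neg h0, if_neg h1, degree_zero]
          exact WithBot.bot_lt_coe _
    · intro i
      exact hpd _
    · rw [← Finset.sum_subset (Finset.subset_univ ({i0, i1} : Finset (Fin m)))]
      · rw [Finset.sum_insert (by simp [hne01]), Finset.sum_singleton]
        beta_reduce
        rw [if_pos rfl, if_neg (Ne.symm hne01), if_pos rfl]
        ring
      · intro b _ hb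
        simp only [Finset.mem_insert, Finset.mem_singleton, not_or] at hb
        beta_reduce
        rw [if_neg hb.1, if_neg hb.2, zero_mul]
  · -- hard case : k < q
    push_neg at hkq
    obtain ⟨p, hCp⟩ := CharP.exists F
    haveI := hCp
    obtain ⟨np, hppr, hqpn⟩ := FiniteField.card F p
    have hLpow : ∀ j t : ℕ, ∃ w : F[X], hasseDeriv t ((lam F)^j)
        = C (((lam F)^j).coeff t) + lam F * w :=
      fun j => lam_hasse_pow (lam_hasse p (np : ℕ) hppr hqpn) j
    set N := M - c with hNdef
    have hNpos : 0 < N := by omega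
    have hMNc : M = N + c := by omega
    -- the twisted witnesses
    have hUex : ∀ (i : Fin m) (b : ℕ), ∃ Ub : F[X], Ub.degree ≤ (h : WithBot ℕ) ∧
        (b < M → ∀ α : F, (hasseDeriv b (Fi i)).eval α = r α * Ub.eval α) := by
      intro i b
      by_cases hb : b < M
      · obtain ⟨Ub, hU1, hU2⟩ := hFtw i b hb
        exact ⟨Ub, hU1, fun _ => hU2⟩
      · exact ⟨0, by simp, fun hcon => absurd hcon hb⟩
    choose U hU1 hU2 using hUex
    -- dimension count
    have hcard1 : Module.finrank F ((Fin m × Fin N × Fin (k+1)) → F) = m * (N * (k+1)) := by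
      rw [Module.finrank_pi]
      simp
    have hcard2 : Module.finrank F ((Fin M × Fin (k+h+1)) → F) = M * (k+h+1) := by
      rw [Module.finrank_pi]
      simp
    have hkey : M * (k+h+1) < m * (N * (k+1)) := by
      have h2 : m * N = M + ((m-1)*M - m*c) := by
        have e1 : m * N + m * c = m * M := by rw [hMNc]; ring
        have e2 : (m-1)*M + M = m*M := by
          obtain ⟨m', rfl⟩ : ∃ m', m = m' + 1 := ⟨m-1, by omega⟩
          simp only [Nat.add_sub_cancel]
          ring
        omega
      have h3 : m * (N * (k+1)) = (M + ((m-1)*M - m*c)) * (k+1) := by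
        rw [← h2]; ring
      rw [h3]
      nlinarith [hkD]
    have hninj : ¬ Function.Injective (PhiD k m N M h U) := by
      intro hinj
      have := LinearMap.finrank_le_finrank_of_injective hinj
      omega
    obtain ⟨x, y, hxy, hne⟩ := Function.not_injective_iff.mp hninj
    set z := x - y with hzdef
    have hz0 : z ≠ 0 := sub_ne_zero_of_ne hne
    have hPz : PhiD k m N M h U z = 0 := by
      rw [hzdef, map_sub, hxy, sub_self]
    have hV0 : ∀ ℓ, ℓ < M → VD k m N U z ℓ = 0 := by
      intro ℓ hℓ
      apply Polynomial.ext
      intro d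
      rw [coeff_zero]
      by_cases hd : d < k + h + 1
      · have := congrFun hPz (⟨ℓ, hℓ⟩, ⟨d, hd⟩)
        rw [PhiD_apply] at this
        simpa using this
      · apply coeff_eq_zero_of_degree_lt
        refine lt_of_le_of_lt (VD_deg U hU1 z ℓ) ?_
        exact_mod_cast (by omega : k + h < d)
    have hEval : ∀ ℓ, ℓ < M → ∀ α : F,
        (hasseDeriv ℓ (∑ i, AD k m N z i * Fi i)).eval α = 0 := by
      intro ℓ hℓ α
      calc (hasseDeriv ℓ (∑ i, AD k m N z i * Fi i)).eval α
          = ∑ i, ∑ sb ∈ Finset.HasAntidiagonal.antidiagonal ℓ,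
              (BD k m N z i sb.1).eval α * (r α * (U i sb.2).eval α) := by
            rw [map_sum, eval_finset_sum]
            refine Finset.sum_congr rfl fun i _ => ?_
            rw [hasseDeriv_mul, eval_finset_sum]
            refine Finset.sum_congr rfl fun sb hsb => ?_
            have hsb2 : sb.2 ≤ ℓ := by
              have := Finset.HasAntidiagonal.mem_antidiagonal.mp hsb
              omega
            rw [eval_mul, AD_eval_hasse hLpow, hU2 i sb.2 (lt_of_le_of_lt hsb2 hℓ) α]
        _ = r α * (VD k m N U z ℓ).eval α := by
            rw [VD, eval_finset_sum, Finset.mul_sum]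
            refine Finset.sum_congr rfl fun i _ => ?_
            rw [eval_finset_sum, Finset.mul_sum]
            refine Finset.sum_congr rfl fun sb _ => ?_
            rw [eval_mul]
            ring
        _ = 0 := by
            rw [hV0 ℓ hℓ]
            simp
    have hdvd1 : ∀ α : F, (X - C α)^M ∣ (∑ i, AD k m N z i * Fi i) := by
      intro α
      have hT : (X : F[X])^M ∣ taylor α (∑ i, AD k m N z i * Fi i) := by
        rw [X_pow_dvd_iff]
        intro d hd
        rw [taylor_coeff]
        exact hEval d hd α
      obtain ⟨g, hg⟩ := hT
      refine ⟨taylor (-α) g, ?_⟩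
      have hEE : (∑ i, AD k m N z i * Fi i)
          = taylor (-α) (taylor α (∑ i, AD k m N z i * Fi i)) := by
        rw [taylor_taylor]
        rw [show (-α + α) = 0 by ring, taylor_zero]
      rw [hEE, hg, taylor_mul]
      congr 1
      have hpow : taylor (-α) ((X : F[X])^M) = (X + C (-α))^M := by
        have hm := map_pow (taylorAlgHom (R := F) (-α)) (X : F[X]) M
        simp only [taylorAlgHom_apply, taylor_X] at hm
        exact hm
      rw [hpow, map_neg, ← sub_eq_add_neg]
    have hdvdE : (∏ α : F, (X - C α)^M) ∣ (∑ i, AD k m N z i * Fi i) :=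
      Fintype.prod_dvd_of_coprime
        (fun a b hab => (pairwise_coprime_X_sub_C Function.injective_id hab).pow)
        hdvd1
    have hprodeg : (∏ α : F, (X - C α)^M).degree = ((M * q : ℕ) : WithBot ℕ) := by
      rw [degree_prod]
      have hper : ∀ α : F, ((X - C α)^M).degree = ((M : ℕ) : WithBot ℕ) := by
        intro α
        rw [degree_pow, degree_X_sub_C, Nat.smul_one_eq_cast]
      rw [Finset.sum_congr rfl (fun α _ => hper α), Finset.sum_const, Finset.card_univ]
      rw [nsmul_coe, mul_comm]
    have hEdeg : (∑ i, AD k m N z i * Fi i).degree < ((M * q : ℕ) : WithBot ℕ) := by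
      refine lt_of_le_of_lt (degree_sum_le _ _) ?_
      rw [Finset.sup_lt_iff (by exact_mod_cast WithBot.bot_lt_coe _)]
      intro i _
      by_cases hA0 : AD k m N z i = 0
      · rw [hA0, zero_mul, degree_zero]
        exact WithBot.bot_lt_coe _
      · rw [degree_mul]
        have h1 : (AD k m N z i).degree < ((N * q : ℕ) : WithBot ℕ) := AD_deg hkq z i
        have h2 : (Fi i).degree < ((c * q : ℕ) : WithBot ℕ) := hFdeg i
        have hA' : (AD k m N z i).natDegree < N * q := (natDegree_lt_iff_degree_lt hA0).mpr h1
        have hF' : (Fi i).natDegree < c * q := (natDegree_lt_iff_degree_lt (hzero i)).mpr h2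
        rw [degree_eq_natDegree hA0, degree_eq_natDegree (hzero i)]
        have hsum : (AD k m N z i).natDegree + (Fi i).natDegree < M * q := by
          have : N * q + c * q = M * q := by rw [hMNc]; ring
          omega
        exact_mod_cast hsum
    have hE0 : (∑ i, AD k m N z i * Fi i) = 0 := by
      by_contra hEne
      have hle := degree_le_of_dvd hdvdE hEne
      rw [hprodeg] at hle
      exact absurd hle (not_le.mpr hEdeg)
    refine ⟨AD k m N z, ?_, ?_, ?_, hE0⟩
    · intro hall
      apply hz0
      funext v
      obtain ⟨i, j, d⟩ := v
      exact AD_zero hkq z i (hall i) j d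
    · intro i
      refine lt_of_lt_of_le (AD_deg hkq z i) ?_
      exact_mod_cast Nat.mul_le_mul_right q (by omega : N ≤ M)
    · intro i
      exact AD_pdeg hLpow hkq z i
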